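/- arXiv:1706.08234 — 2 statements merged into one kernel-verified Lean document; each statement's English description precedes it below -/
import Mathlib

section
/- For real numbers x₁, …, xₙ (n ≥ 1) not all equal, let x̄ = n⁻¹∑xᵢ and μ_j = n⁻¹∑(xᵢ − x̄)^j. Then the sample kurtosis satisfies μ₄/μ₂² ≥ 1 + μ₃²/μ₂³. -/
theorem sample_pearson_inequality (n : ℕ) (hn : 1 ≤ n) (x : Fin n → ℝ)
    (hne : ∃ i j, x i ≠ x j) :
    let xbar := (n : ℝ)⁻¹ * ∑ i, x i
    let μ : ℕ → ℝ := fun j => (n : ℝ)⁻¹ * ∑ i, (x i - xbar) ^ j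
    1 + μ 3 ^ 2 / μ 2 ^ 3 ≤ μ 4 / μ 2 ^ 2 := by
  intro xbar μ
  have hn0 : (0:ℝ) < n := by exact_mod_cast hn
  have hn0' : (n:ℝ) ≠ 0 := ne_of_gt hn0
  set y : Fin n → ℝ := fun i => x i - xbar with hy
  set S2 : ℝ := ∑ i, y i ^ 2 with hS2
  set S3 : ℝ := ∑ i, y i ^ 3 with hS3
  set S4 : ℝ := ∑ i, y i ^ 4 with hS4
  have hS1 : ∑ i, y i = 0 := by
    simp only [hy, Finset.sum_sub_distrib, Finset.sum_const, Finset.card_univ,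
      Fintype.card_fin, nsmul_eq_mul]
    field_simp [xbar]
    show ∑ i, x i - (n:ℝ) * ((n:ℝ)⁻¹ * ∑ i, x i) = 0
    rw [← mul_assoc, mul_inv_cancel₀ hn0', one_mul, sub_self]
  have hS2pos : 0 < S2 := by
    rcases hne with ⟨i, j, hij⟩
    have hne' : y i ≠ 0 ∨ y j ≠ 0 := by
      by_contra h
      push_neg at h
      apply hij
      have h1 := h.1; have h2 := h.2
      simp only [hy, sub_eq_zero] at h1 h2
      rw [h1, h2]
    rcases hne' with h | h
    · calc (0:ℝ) < y i ^ 2 := by positivity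
        _ ≤ S2 := Finset.single_le_sum (fun k _ => sq_nonneg (y k)) (Finset.mem_univ i)
    · calc (0:ℝ) < y j ^ 2 := by positivity
        _ ≤ S2 := Finset.single_le_sum (fun k _ => sq_nonneg (y k)) (Finset.mem_univ j)
  -- key nonnegativity
  have key : (0:ℝ) ≤ (n:ℝ)^2 * S2^2 * S4 - (n:ℝ)^2 * S3^2 * S2 - (n:ℝ) * S2^4 := by
    have expand : ∀ i : Fin n, ((n:ℝ)*S2*(y i)^2 - (n:ℝ)*S3*(y i) - S2^2)^2
        = ((n:ℝ)*S2)^2 * (y i)^4 - 2*((n:ℝ)*S2)*((n:ℝ)*S3) * (y i)^3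
          + (((n:ℝ)*S3)^2 - 2*((n:ℝ)*S2)*(S2^2)) * (y i)^2
          + 2*((n:ℝ)*S3)*(S2^2) * (y i) + (S2^2)^2 := by
      intro i; ring
    have hsum : (0:ℝ) ≤ ∑ i, ((n:ℝ)*S2*(y i)^2 - (n:ℝ)*S3*(y i) - S2^2)^2 :=
      Finset.sum_nonneg fun i _ => sq_nonneg _
    rw [Finset.sum_congr rfl (fun i _ => expand i)] at hsum
    simp only [Finset.sum_add_distrib, Finset.sum_sub_distrib, ← Finset.mul_sum,
      Finset.sum_const, Finset.card_univ, Fintype.card_fin, nsmul_eq_mul] at hsum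
    rw [← hS2, ← hS3, ← hS4, hS1] at hsum
    nlinarith [hsum]
  have hkey2 : S2^3 + (n:ℝ) * S3^2 ≤ (n:ℝ) * S4 * S2 := by
    nlinarith [key, mul_pos hn0 hS2pos]
  have hμ2 : μ 2 = (n:ℝ)⁻¹ * S2 := rfl
  have hμ3 : μ 3 = (n:ℝ)⁻¹ * S3 := rfl
  have hμ4 : μ 4 = (n:ℝ)⁻¹ * S4 := rfl
  have hμ2pos : 0 < μ 2 := by rw [hμ2]; positivity
  have hmain : μ 2 ^ 3 + μ 3 ^ 2 ≤ μ 4 * μ 2 := by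
    rw [hμ2, hμ3, hμ4]
    have h : ((n:ℝ)⁻¹ * S2) ^ 3 + ((n:ℝ)⁻¹ * S3) ^ 2
        = (n:ℝ)⁻¹ ^ 2 * (((n:ℝ)⁻¹ * S2^3) + S3^2) := by
      field_simp
    rw [h]
    have h' : (n:ℝ)⁻¹ * S4 * ((n:ℝ)⁻¹ * S2) = (n:ℝ)⁻¹ ^ 2 * (S4 * S2) := by ring
    rw [h']
    apply mul_le_mul_of_nonneg_left _ (by positivity)
    have hm := mul_le_mul_of_nonneg_left hkey2 (le_of_lt (inv_pos.mpr hn0))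
    have e1 : (n:ℝ)⁻¹ * (S2^3 + (n:ℝ)*S3^2) = (n:ℝ)⁻¹*S2^3 + S3^2 := by
      field_simp
    have e2 : (n:ℝ)⁻¹ * ((n:ℝ)*S4*S2) = S4*S2 := by field_simp
    linarith [hm, e1, e2]
  have h1 : 1 + μ 3 ^ 2 / μ 2 ^ 3 = (μ 2 ^ 3 + μ 3 ^ 2) / μ 2 ^ 3 := by
    field_simp
  have h2 : μ 4 / μ 2 ^ 2 = (μ 4 * μ 2) / μ 2 ^ 3 := by
    field_simp
  rw [h1, h2]
  exact div_le_div_of_nonneg_right hmain (by positivity)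
end

section
/- Under the assumptions of the previous moment convergence (u_{t,n} = g(t/n)ε_t with i.i.d. standardized ε_t having finite fourth moment, g bounded, piecewise Lipschitz, g ≥ c > 0), the sample kurtosis statistic (n⁻¹∑u_{t,n}⁴)/(n⁻¹∑u_{t,n}²)² converges in probability to κ₂·E(ε₁⁴), where κ₂ = ∫₀¹g⁴/(∫₀¹g²)². Hence (1/24)·((n⁻¹∑u⁴)/(n⁻¹∑u²)² − 3)² converges in probability to (1/24)·(κ₂·E ε₁⁴ − 3)². -/
open MeasureTheory ProbabilityTheory Set Filter Topology

private lemma abel_id (b S : ℕ → ℝ) (hS0 : S 0 = 0) :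
    ∀ n, 1 ≤ n → ∑ t ∈ Finset.range n, b t * (S (t+1) - S t)
      = b (n-1) * S n - ∑ t ∈ Finset.Ico 1 n, (b t - b (t-1)) * S t := by
  intro n hn
  induction n, hn using Nat.le_induction with
  | base => simp [hS0]
  | succ n hn ih =>
    rw [Finset.sum_range_succ, ih, Finset.sum_Ico_succ_top hn]
    simp only [Nat.add_sub_cancel]
    ring

private lemma tp_mono (m : ℕ) (tp : ℕ → ℝ) (hlt : ∀ i < m, tp i < tp (i+1)) :
    ∀ j ≤ m, ∀ i < j, tp i < tp j := by
  intro j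
  induction j with
  | zero => intro _ i hi; omega
  | succ j ih =>
    intro hj i hi
    have hjm : j < m := hj
    rcases Nat.lt_succ_iff_lt_or_eq.mp hi with h | h
    · exact (ih (le_of_lt hjm) i h).trans (hlt j hjm)
    · subst h; exact hlt i hjm

private lemma piece_find (m : ℕ) (tp : ℕ → ℝ) (hm : 0 < m) (h0 : tp 0 = 0) (h1 : tp m = 1)
    {x : ℝ} (hx : x ∈ Ioc (0:ℝ) 1) : ∃ i < m, x ∈ Ioc (tp i) (tp (i+1)) := by
  classical
  have hex : ∃ i, x ≤ tp (i + 1) := ⟨m - 1, by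
    rw [Nat.sub_add_cancel hm, h1]; exact hx.2⟩
  refine ⟨Nat.find hex, ?_, ?_, Nat.find_spec hex⟩
  · have : Nat.find hex ≤ m - 1 := Nat.find_min' hex (by
      rw [Nat.sub_add_cancel hm, h1]; exact hx.2)
    omega
  · rcases Nat.eq_zero_or_pos (Nat.find hex) with h | h
    · rw [h, h0]; exact hx.1
    · have h2 := Nat.find_min hex (Nat.pred_lt (Nat.pos_iff_ne_zero.mp h))
      have h3 : (Nat.find hex).pred + 1 = Nat.find hex := Nat.succ_pred_eq_of_pos h
      rw [h3] at h2
      exact lt_of_not_ge h2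

private lemma osc_bound (m : ℕ) (tp : ℕ → ℝ) (hm : 0 < m) (h0 : tp 0 = 0) (h1 : tp m = 1)
    (hlt : ∀ i < m, tp i < tp (i+1))
    (f : ℝ → ℝ) (Lf Mf : ℝ) (hLf : 0 ≤ Lf) (hMf0 : 0 ≤ Mf)
    (hflip : ∀ i < m, ∀ x ∈ Ioc (tp i) (tp (i+1)), ∀ y ∈ Ioc (tp i) (tp (i+1)),
      |f y - f x| ≤ Lf * |y - x|)
    (hMf : ∀ r ∈ Ioc (0:ℝ) 1, |f r| ≤ Mf)
    {x y : ℝ} (hx : x ∈ Ioc (0:ℝ) 1) (hy : y ∈ Ioc (0:ℝ) 1) (hxy : x ≤ y) :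
    |f y - f x| ≤ Lf * (y - x)
      + 2 * Mf * (((Finset.Ico 1 m).filter (fun i => tp i ∈ Ico x y)).card : ℝ) := by
  obtain ⟨i, him, hxi⟩ := piece_find m tp hm h0 h1 hx
  obtain ⟨j, hjm, hyj⟩ := piece_find m tp hm h0 h1 hy
  have hij : i ≤ j := by
    by_contra h
    push_neg at h
    have : tp (j+1) ≤ tp i := by
      rcases eq_or_lt_of_le (Nat.succ_le_of_lt h) with he | hl
      · exact le_of_eq (congrArg tp he)
      · exact le_of_lt (tp_mono m tp hlt i (le_of_lt him) (j+1) hl)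
    exact absurd ((hyj.2.trans this).trans_lt hxi.1) (not_lt.mpr hxy)
  rcases eq_or_lt_of_le hij with he | hl
  · subst he
    have := hflip i him x hxi y hyj
    have hcard : (0:ℝ) ≤ (((Finset.Ico 1 m).filter (fun i => tp i ∈ Ico x y)).card : ℝ) :=
      Nat.cast_nonneg _
    have habs : |y - x| = y - x := abs_of_nonneg (by linarith)
    nlinarith
  · have hcard : 1 ≤ (((Finset.Ico 1 m).filter (fun i => tp i ∈ Ico x y)).card : ℝ) := by
      have hjmem : j ∈ (Finset.Ico 1 m).filter (fun i => tp i ∈ Ico x y) := by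
        refine Finset.mem_filter.mpr ⟨Finset.mem_Ico.mpr ⟨by omega, hjm⟩, ?_, hyj.1⟩
        calc x ≤ tp (i+1) := hxi.2
        _ ≤ tp j := by
            rcases eq_or_lt_of_le (Nat.succ_le_of_lt hl) with he | hl2
            · exact le_of_eq (congrArg tp he)
            · exact le_of_lt (tp_mono m tp hlt j (le_of_lt hjm) (i+1) hl2)
      have := Finset.card_pos.mpr ⟨j, hjmem⟩
      exact_mod_cast this
    have h2 : |f y - f x| ≤ 2 * Mf := by
      calc |f y - f x| ≤ |f y| + |f x| := abs_sub _ _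
      _ ≤ Mf + Mf := add_le_add (hMf y hy) (hMf x hx)
      _ = 2 * Mf := by ring
    nlinarith

private lemma count_bound (m n : ℕ) (tp : ℕ → ℝ) :
    ∑ t ∈ Finset.range n,
      (((Finset.Ico 1 m).filter (fun i => tp i ∈ Ico ((t:ℝ)/n) (((t:ℝ)+1)/n))).card) ≤ m := by
  classical
  have key : ∀ i ∈ Finset.Ico 1 m,
      ((Finset.range n).filter (fun (t : ℕ) => tp i ∈ Ico ((t:ℝ)/n) (((t:ℝ)+1)/n))).card ≤ 1 := by
    intro i _
    rw [Finset.card_le_one]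
    intro a ha b hb
    simp only [Finset.mem_filter, Finset.mem_range, mem_Ico] at ha hb
    have hn : (0:ℝ) < n := by
      have hh : 0 < n := lt_of_le_of_lt (Nat.zero_le a) ha.1
      exact_mod_cast hh
    have h1 : (a:ℝ) < (b:ℝ) + 1 := by
      have := lt_of_le_of_lt ha.2.1 hb.2.2
      rw [div_lt_div_iff_of_pos_right hn] at this
      exact this
    have h2 : (b:ℝ) < (a:ℝ) + 1 := by
      have := lt_of_le_of_lt hb.2.1 ha.2.2
      rw [div_lt_div_iff_of_pos_right hn] at this
      exact this
    have h3 : a < b + 1 := by exact_mod_cast h1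
    have h4 : b < a + 1 := by exact_mod_cast h2
    omega
  calc ∑ t ∈ Finset.range n,
      (((Finset.Ico 1 m).filter (fun i => tp i ∈ Ico ((t:ℝ)/n) (((t:ℝ)+1)/n))).card)
      = ∑ t ∈ Finset.range n, ∑ i ∈ Finset.Ico 1 m,
          (if tp i ∈ Ico ((t:ℝ)/n) (((t:ℝ)+1)/n) then 1 else 0) := by
        refine Finset.sum_congr rfl fun t _ => ?_
        rw [Finset.card_filter]
    _ = ∑ i ∈ Finset.Ico 1 m, ∑ t ∈ Finset.range n,
          (if tp i ∈ Ico ((t:ℝ)/n) (((t:ℝ)+1)/n) then 1 else 0) := Finset.sum_comm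
    _ ≤ ∑ i ∈ Finset.Ico 1 m, 1 := by
        refine Finset.sum_le_sum fun i hi => ?_
        have he : (∑ t ∈ Finset.range n, if tp i ∈ Ico ((t:ℝ)/n) (((t:ℝ)+1)/n) then 1 else 0)
            = ((Finset.range n).filter (fun (t : ℕ) => tp i ∈ Ico ((t:ℝ)/n) (((t:ℝ)+1)/n))).card :=
          (Finset.card_filter _ _).symm
        rw [he]
        exact key i hi
    _ ≤ m := by simp

private lemma grid_mem (n t : ℕ) (hn : 0 < n) (ht1 : 1 ≤ t) (htn : t ≤ n) :
    (t:ℝ)/n ∈ Ioc (0:ℝ) 1 := by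
  have hnR : (0:ℝ) < n := by exact_mod_cast hn
  have htR : (1:ℝ) ≤ t := by exact_mod_cast ht1
  constructor
  · positivity
  · rw [div_le_one hnR]; exact_mod_cast htn

private lemma tv_bound (m : ℕ) (tp : ℕ → ℝ) (hm : 0 < m) (h0 : tp 0 = 0) (h1 : tp m = 1)
    (hlt : ∀ i < m, tp i < tp (i+1))
    (f : ℝ → ℝ) (Lf Mf : ℝ) (hLf : 0 ≤ Lf) (hMf0 : 0 ≤ Mf)
    (hflip : ∀ i < m, ∀ x ∈ Ioc (tp i) (tp (i+1)), ∀ y ∈ Ioc (tp i) (tp (i+1)),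
      |f y - f x| ≤ Lf * |y - x|)
    (hMf : ∀ r ∈ Ioc (0:ℝ) 1, |f r| ≤ Mf) (n : ℕ) :
    ∑ t ∈ Finset.Ico 1 n, |f (((t:ℝ)+1)/n) - f ((t:ℝ)/n)| ≤ Lf + 2*Mf*m := by
  rcases Nat.eq_zero_or_pos n with hn | hn
  · subst hn; simp; positivity
  have hnR : (0:ℝ) < n := by exact_mod_cast hn
  have hterm : ∀ t ∈ Finset.Ico 1 n,
      |f (((t:ℝ)+1)/n) - f ((t:ℝ)/n)| ≤ Lf * (1/n)
        + 2*Mf*(((Finset.Ico 1 m).filter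
            (fun i => tp i ∈ Ico ((t:ℝ)/n) (((t:ℝ)+1)/n))).card : ℝ) := by
    intro t ht
    rw [Finset.mem_Ico] at ht
    have hx : (t:ℝ)/n ∈ Ioc (0:ℝ) 1 := grid_mem n t hn ht.1 (le_of_lt ht.2)
    have hy : ((t:ℝ)+1)/n ∈ Ioc (0:ℝ) 1 := by
      have hcast : ((t:ℝ)+1) = ((t+1:ℕ):ℝ) := by push_cast; ring
      rw [hcast]; exact grid_mem n (t+1) hn (by omega) ht.2
    have hxy : (t:ℝ)/n ≤ ((t:ℝ)+1)/n := by gcongr; linarith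
    have hosc := osc_bound m tp hm h0 h1 hlt f Lf Mf hLf hMf0 hflip hMf hx hy hxy
    have hyx : ((t:ℝ)+1)/n - (t:ℝ)/n = 1/n := by field_simp; ring
    rw [hyx] at hosc
    exact hosc
  have hsub : Finset.Ico 1 n ⊆ Finset.range n := by
    intro a ha; rw [Finset.mem_range]; exact (Finset.mem_Ico.mp ha).2
  have hsum : ∑ t ∈ Finset.Ico 1 n,
      ((((Finset.Ico 1 m).filter
        (fun i => tp i ∈ Ico ((t:ℝ)/n) (((t:ℝ)+1)/n))).card : ℝ)) ≤ m := by
    calc ∑ t ∈ Finset.Ico 1 n,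
        ((((Finset.Ico 1 m).filter
          (fun i => tp i ∈ Ico ((t:ℝ)/n) (((t:ℝ)+1)/n))).card : ℝ))
        ≤ ∑ t ∈ Finset.range n,
          ((((Finset.Ico 1 m).filter
            (fun i => tp i ∈ Ico ((t:ℝ)/n) (((t:ℝ)+1)/n))).card : ℝ)) :=
          Finset.sum_le_sum_of_subset_of_nonneg hsub (fun _ _ _ => Nat.cast_nonneg _)
      _ ≤ m := by exact_mod_cast count_bound m n tp
  have hcard : ((Finset.Ico 1 n).card : ℝ) ≤ n := by
    rw [Nat.card_Ico]; exact_mod_cast Nat.sub_le n 1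
  have e1 : (n:ℝ) * (Lf * (1/n)) = Lf := by field_simp
  have h1' := mul_le_mul_of_nonneg_right hcard (show (0:ℝ) ≤ Lf*(1/n) by positivity)
  rw [e1] at h1'
  calc ∑ t ∈ Finset.Ico 1 n, |f (((t:ℝ)+1)/n) - f ((t:ℝ)/n)|
      ≤ ∑ t ∈ Finset.Ico 1 n, (Lf * (1/n)
        + 2*Mf*(((Finset.Ico 1 m).filter
            (fun i => tp i ∈ Ico ((t:ℝ)/n) (((t:ℝ)+1)/n))).card : ℝ)) :=
        Finset.sum_le_sum hterm
    _ = ((Finset.Ico 1 n).card : ℝ) * (Lf * (1/n))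
        + 2*Mf * ∑ t ∈ Finset.Ico 1 n,
          ((((Finset.Ico 1 m).filter
            (fun i => tp i ∈ Ico ((t:ℝ)/n) (((t:ℝ)+1)/n))).card : ℝ)) := by
        rw [Finset.sum_add_distrib, Finset.sum_const, nsmul_eq_mul, Finset.mul_sum]
    _ ≤ Lf + 2*Mf*m :=
        add_le_add h1' (mul_le_mul_of_nonneg_left hsum (by positivity))

private lemma riemann (m : ℕ) (tp : ℕ → ℝ) (hm : 0 < m) (h0 : tp 0 = 0) (h1 : tp m = 1)
    (hlt : ∀ i < m, tp i < tp (i+1))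
    (f : ℝ → ℝ) (Lf Mf : ℝ) (hLf : 0 ≤ Lf) (hMf0 : 0 ≤ Mf)
    (hflip : ∀ i < m, ∀ x ∈ Ioc (tp i) (tp (i+1)), ∀ y ∈ Ioc (tp i) (tp (i+1)),
      |f y - f x| ≤ Lf * |y - x|)
    (hMf : ∀ r ∈ Ioc (0:ℝ) 1, |f r| ≤ Mf) (hfm : Measurable f) :
    Tendsto (fun n : ℕ => (n:ℝ)⁻¹ * ∑ t ∈ Finset.range n, f (((t:ℝ)+1)/n)) atTop
      (𝓝 (∫ r in Ioc (0:ℝ) 1, f r)) := by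
  have hvol01 : volume (Ioc (0:ℝ) 1) ≠ ⊤ := by
    rw [Real.volume_Ioc]; exact ENNReal.ofReal_ne_top
  have hint : IntegrableOn f (Ioc (0:ℝ) 1) volume := by
    apply Measure.integrableOn_of_bounded hvol01 hfm.aestronglyMeasurable (M := Mf)
    rw [ae_restrict_iff' measurableSet_Ioc]
    filter_upwards with x hx
    rw [Real.norm_eq_abs]
    exact hMf x hx
  have hbound : ∀ n : ℕ, 1 ≤ n →
      ‖(n:ℝ)⁻¹ * ∑ t ∈ Finset.range n, f (((t:ℝ)+1)/n) - ∫ r in Ioc (0:ℝ) 1, f r‖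
        ≤ (Lf + 2*Mf*m)/n := by
    intro n hn
    have hnR : (0:ℝ) < n := by exact_mod_cast hn
    have hsubt : ∀ t, t < n → Ioc ((t:ℝ)/n) (((t:ℝ)+1)/n) ⊆ Ioc (0:ℝ) 1 := by
      intro t htn x hx
      constructor
      · have h0t : (0:ℝ) ≤ (t:ℝ)/n := by positivity
        exact lt_of_le_of_lt h0t hx.1
      · apply hx.2.trans
        rw [div_le_one hnR]
        have : ((t:ℝ)+1) = ((t+1:ℕ):ℝ) := by push_cast; ring
        rw [this]
        exact_mod_cast htn
    have hInt : ∀ t, t < n → IntegrableOn f (Ioc ((t:ℝ)/n) (((t:ℝ)+1)/n)) volume :=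
      fun t htn => hint.mono_set (hsubt t htn)
    have hmono : ∀ t : ℕ, (t:ℝ)/n ≤ ((t:ℝ)+1)/n := by
      intro t; gcongr; linarith
    have hsplit : ∫ r in Ioc (0:ℝ) 1, f r
        = ∑ t ∈ Finset.range n, ∫ r in Ioc ((t:ℝ)/n) (((t:ℝ)+1)/n), f r := by
      have hii : ∀ k < n, IntervalIntegrable f volume ((k:ℝ)/n) (((k:ℝ)+1)/n) := by
        intro k hk
        rw [intervalIntegrable_iff, uIoc_of_le (hmono k)]
        exact hInt k hk
      have hii' : ∀ k < n, IntervalIntegrable f volume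
          ((fun t : ℕ => (t:ℝ)/n) k) ((fun t : ℕ => (t:ℝ)/n) (k+1)) := by
        intro k hk
        have : ((k+1:ℕ):ℝ) = (k:ℝ)+1 := by push_cast; ring
        simp only [this]
        exact hii k hk
      have hsum := intervalIntegral.sum_integral_adjacent_intervals hii'
      have e0 : ((0:ℕ):ℝ)/n = 0 := by simp
      have en : ((n:ℕ):ℝ)/n = 1 := by field_simp
      rw [e0, en, intervalIntegral.integral_of_le zero_le_one] at hsum
      rw [← hsum]
      refine Finset.sum_congr rfl fun t _ => ?_
      have : ((t+1:ℕ):ℝ) = (t:ℝ)+1 := by push_cast; ring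
      rw [this, intervalIntegral.integral_of_le (hmono t)]
    have hvolt : ∀ t : ℕ, volume (Ioc ((t:ℝ)/n) (((t:ℝ)+1)/n)) = ENNReal.ofReal (1/n) := by
      intro t
      rw [Real.volume_Ioc]
      congr 1
      field_simp; ring
    have hterm : ∀ t ∈ Finset.range n,
        ‖(n:ℝ)⁻¹ * f (((t:ℝ)+1)/n) - ∫ r in Ioc ((t:ℝ)/n) (((t:ℝ)+1)/n), f r‖
          ≤ (Lf * (1/n) + 2*Mf*(((Finset.Ico 1 m).filter
              (fun i => tp i ∈ Ico ((t:ℝ)/n) (((t:ℝ)+1)/n))).card : ℝ)) * (1/n) := by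
      intro t ht
      rw [Finset.mem_range] at ht
      have hconst : ∫ _ in Ioc ((t:ℝ)/n) (((t:ℝ)+1)/n), f (((t:ℝ)+1)/n)
          = (n:ℝ)⁻¹ * f (((t:ℝ)+1)/n) := by
        rw [setIntegral_const, measureReal_def, hvolt t, ENNReal.toReal_ofReal (by positivity), smul_eq_mul,
          one_div]
      have hdiff : (n:ℝ)⁻¹ * f (((t:ℝ)+1)/n) - ∫ r in Ioc ((t:ℝ)/n) (((t:ℝ)+1)/n), f r
          = ∫ r in Ioc ((t:ℝ)/n) (((t:ℝ)+1)/n), (f (((t:ℝ)+1)/n) - f r) := by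
        rw [integral_sub (integrable_const _) (hInt t ht), hconst]
      rw [hdiff]
      have hstrict : (t:ℝ)/n < ((t:ℝ)+1)/n := by
        rw [div_lt_div_iff_of_pos_right hnR]; linarith
      have hylt : ((t:ℝ)+1)/n ∈ Ioc (0:ℝ) 1 := hsubt t ht ⟨hstrict, le_refl _⟩
      refine le_trans (norm_setIntegral_le_of_norm_le_const
        (C := Lf * (1/(n:ℝ)) + 2*Mf*(((Finset.Ico 1 m).filter
          (fun i => tp i ∈ Ico ((t:ℝ)/n) (((t:ℝ)+1)/n))).card : ℝ))
        ?_ ?_) (le_of_eq ?_)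
      · rw [hvolt t]; exact ENNReal.ofReal_lt_top
      · intro x hx
        have hx01 : x ∈ Ioc (0:ℝ) 1 := hsubt t ht hx
        have hosc := osc_bound m tp hm h0 h1 hlt f Lf Mf hLf hMf0 hflip hMf hx01 hylt hx.2
        rw [Real.norm_eq_abs]
        refine hosc.trans (add_le_add ?_ ?_)
        · apply mul_le_mul_of_nonneg_left ?_ hLf
          have hee : ((t:ℝ)+1)/n - (t:ℝ)/n = 1/n := by field_simp; ring
          linarith [hx.1]
        · apply mul_le_mul_of_nonneg_left ?_ (by positivity : (0:ℝ) ≤ 2*Mf)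
          have hsubf : (Finset.Ico 1 m).filter (fun i => tp i ∈ Ico x (((t:ℝ)+1)/n))
              ⊆ (Finset.Ico 1 m).filter
                (fun i => tp i ∈ Ico ((t:ℝ)/n) (((t:ℝ)+1)/n)) :=
            Finset.monotone_filter_right _
              (fun i _ hi => ⟨le_trans (le_of_lt hx.1) hi.1, hi.2⟩)
          exact_mod_cast Finset.card_le_card hsubf
      · rw [measureReal_def, hvolt t, ENNReal.toReal_ofReal (by positivity)]
    have hs : ∑ t ∈ Finset.range n, (Lf * (1/n) + 2*Mf*(((Finset.Ico 1 m).filter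
          (fun i => tp i ∈ Ico ((t:ℝ)/n) (((t:ℝ)+1)/n))).card : ℝ)) ≤ Lf + 2*Mf*m := by
      rw [Finset.sum_add_distrib, Finset.sum_const, nsmul_eq_mul, Finset.card_range,
        ← Finset.mul_sum]
      have e1 : (n:ℝ) * (Lf * (1/n)) = Lf := by field_simp
      rw [e1]
      have hsum : ∑ t ∈ Finset.range n, ((((Finset.Ico 1 m).filter
          (fun i => tp i ∈ Ico ((t:ℝ)/n) (((t:ℝ)+1)/n))).card : ℝ)) ≤ m := by
        exact_mod_cast count_bound m n tp
      exact add_le_add le_rfl (mul_le_mul_of_nonneg_left hsum (by positivity))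
    calc ‖(n:ℝ)⁻¹ * ∑ t ∈ Finset.range n, f (((t:ℝ)+1)/n) - ∫ r in Ioc (0:ℝ) 1, f r‖
        = ‖∑ t ∈ Finset.range n, ((n:ℝ)⁻¹ * f (((t:ℝ)+1)/n)
            - ∫ r in Ioc ((t:ℝ)/n) (((t:ℝ)+1)/n), f r)‖ := by
          rw [hsplit, Finset.mul_sum, Finset.sum_sub_distrib]
      _ ≤ ∑ t ∈ Finset.range n, ‖(n:ℝ)⁻¹ * f (((t:ℝ)+1)/n)
            - ∫ r in Ioc ((t:ℝ)/n) (((t:ℝ)+1)/n), f r‖ := norm_sum_le _ _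
      _ ≤ ∑ t ∈ Finset.range n, (Lf * (1/n) + 2*Mf*(((Finset.Ico 1 m).filter
            (fun i => tp i ∈ Ico ((t:ℝ)/n) (((t:ℝ)+1)/n))).card : ℝ)) * (1/n) :=
          Finset.sum_le_sum hterm
      _ = (∑ t ∈ Finset.range n, (Lf * (1/n) + 2*Mf*(((Finset.Ico 1 m).filter
            (fun i => tp i ∈ Ico ((t:ℝ)/n) (((t:ℝ)+1)/n))).card : ℝ))) * (1/n) :=
          (Finset.sum_mul _ _ _).symm
      _ ≤ (Lf + 2*Mf*m) * (1/n) :=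
          mul_le_mul_of_nonneg_right hs (by positivity)
      _ = (Lf + 2*Mf*m)/n := by rw [mul_one_div]
  have hz : Tendsto (fun n : ℕ => (n:ℝ)⁻¹ * ∑ t ∈ Finset.range n, f (((t:ℝ)+1)/n)
      - ∫ r in Ioc (0:ℝ) 1, f r) atTop (𝓝 0) := by
    apply squeeze_zero_norm' ?_ (tendsto_const_div_atTop_nhds_zero_nat (Lf + 2*Mf*m))
    filter_upwards [eventually_ge_atTop 1] with n hn
    exact hbound n hn
  have := hz.add (tendsto_const_nhds (x := ∫ r in Ioc (0:ℝ) 1, f r))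
  simpa using this

private lemma weighted_det (S : ℕ → ℝ) (hS0 : S 0 = 0) (μl : ℝ)
    (hS : Tendsto (fun n : ℕ => S n / n) atTop (𝓝 μl))
    (a : ℕ → ℕ → ℝ) (M C : ℝ) (hM : 0 ≤ M) (hC : 0 ≤ C)
    (ha : ∀ n, ∀ t < n, |a n t| ≤ M)
    (hTV : ∀ n, ∑ t ∈ Finset.Ico 1 n, |a n t - a n (t-1)| ≤ C) :
    Tendsto (fun n : ℕ => (n:ℝ)⁻¹ * ∑ t ∈ Finset.range n, a n t * (S (t+1) - S t)
      - ((n:ℝ)⁻¹ * ∑ t ∈ Finset.range n, a n t) * μl) atTop (𝓝 0) := by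
  classical
  set R : ℕ → ℝ := fun t => S t - μl * t with hR
  have hR0 : R 0 = 0 := by simp [hR, hS0]
  have hRlim : Tendsto (fun t : ℕ => R t / t) atTop (𝓝 0) := by
    have hcong : (fun t : ℕ => R t / t) =ᶠ[atTop] fun t : ℕ => S t / t - μl := by
      filter_upwards [eventually_ge_atTop 1] with t ht
      have htR : (0:ℝ) < t := by exact_mod_cast ht
      have : (t:ℝ) ≠ 0 := ne_of_gt htR
      field_simp [hR]
      ring
    rw [tendsto_congr' hcong]
    simpa using hS.sub (tendsto_const_nhds (x := μl))
  have key : ∀ n : ℕ, 1 ≤ n →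
      (n:ℝ)⁻¹ * ∑ t ∈ Finset.range n, a n t * (S (t+1) - S t)
        - ((n:ℝ)⁻¹ * ∑ t ∈ Finset.range n, a n t) * μl
      = (n:ℝ)⁻¹ * (a n (n-1) * R n - ∑ t ∈ Finset.Ico 1 n, (a n t - a n (t-1)) * R t) := by
    intro n hn
    have h1 : ∑ t ∈ Finset.range n, a n t * (S (t+1) - S t)
        = ∑ t ∈ Finset.range n, a n t * (R (t+1) - R t)
          + (∑ t ∈ Finset.range n, a n t) * μl := by
      rw [Finset.sum_mul, ← Finset.sum_add_distrib]
      refine Finset.sum_congr rfl fun t _ => ?_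
      simp only [hR]
      push_cast
      ring
    rw [h1, abel_id (a n) R hR0 n hn]
    ring
  rw [Metric.tendsto_atTop]
  intro ε hε
  set δ := ε / (2*(M + C + 1)) with hδ
  have hδpos : 0 < δ := by positivity
  obtain ⟨N₀, hN₀⟩ := Metric.tendsto_atTop.mp hRlim δ hδpos
  set N₁ := max N₀ 1 with hN₁def
  have hRsmall : ∀ t, N₁ ≤ t → |R t| ≤ δ * t := by
    intro t ht
    have h1 := hN₀ t (le_trans (le_max_left _ _) ht)
    rw [Real.dist_eq, sub_zero] at h1
    have htpos : (0:ℝ) < t := by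
      have : 1 ≤ t := le_trans (le_max_right _ _) ht
      exact_mod_cast this
    rw [abs_div, abs_of_pos htpos] at h1
    calc |R t| = |R t| / t * t := by field_simp
    _ ≤ δ * t := mul_le_mul_of_nonneg_right (le_of_lt h1) (le_of_lt htpos)
  set K := ∑ t ∈ Finset.range N₁, |R t| with hK
  have hK0 : 0 ≤ K := Finset.sum_nonneg fun _ _ => abs_nonneg _
  obtain ⟨N₂, hN₂⟩ := Metric.tendsto_atTop.mp
    (tendsto_const_div_atTop_nhds_zero_nat (2*M*K)) (ε/2) (by positivity)
  refine ⟨max (max N₁ N₂) 1, fun n hn => ?_⟩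
  have hnN₁ : N₁ ≤ n := le_trans (le_trans (le_max_left _ _) (le_max_left _ _)) hn
  have hnN₂ : N₂ ≤ n := le_trans (le_trans (le_max_right _ _) (le_max_left _ _)) hn
  have hn1 : 1 ≤ n := le_trans (le_max_right _ _) hn
  have hnR : (0:ℝ) < n := by exact_mod_cast hn1
  rw [Real.dist_eq, sub_zero, key n hn1]
  have hRn : |R n| ≤ δ * n := hRsmall n hnN₁
  have h1N₁ : 1 ≤ N₁ := le_max_right _ _
  have hdisj : Disjoint (Finset.Ico 1 N₁) (Finset.Ico N₁ n) :=
    Finset.Ico_disjoint_Ico_consecutive 1 N₁ n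
  have hsplit : Finset.Ico 1 n = Finset.Ico 1 N₁ ∪ Finset.Ico N₁ n :=
    (Finset.Ico_union_Ico_eq_Ico h1N₁ hnN₁).symm
  have hsum : ∑ t ∈ Finset.Ico 1 n, |a n t - a n (t-1)| * |R t|
      ≤ 2*M*K + C * (δ * n) := by
    rw [hsplit, Finset.sum_union hdisj]
    have hpart1 : ∑ t ∈ Finset.Ico 1 N₁, |a n t - a n (t-1)| * |R t| ≤ 2*M*K := by
      have hstep : ∀ t ∈ Finset.Ico 1 N₁, |a n t - a n (t-1)| * |R t|
          ≤ 2*M * |R t| := by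
        intro t ht
        rw [Finset.mem_Ico] at ht
        have htn : t < n := lt_of_lt_of_le ht.2 hnN₁
        have hΔ : |a n t - a n (t-1)| ≤ 2*M := by
          calc |a n t - a n (t-1)| ≤ |a n t| + |a n (t-1)| := abs_sub _ _
          _ ≤ M + M := add_le_add (ha n t htn) (ha n (t-1) (by omega))
          _ = 2*M := by ring
        exact mul_le_mul_of_nonneg_right hΔ (abs_nonneg _)
      calc ∑ t ∈ Finset.Ico 1 N₁, |a n t - a n (t-1)| * |R t|
          ≤ ∑ t ∈ Finset.Ico 1 N₁, 2*M * |R t| := Finset.sum_le_sum hstep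
        _ = 2*M * ∑ t ∈ Finset.Ico 1 N₁, |R t| := by rw [Finset.mul_sum]
        _ ≤ 2*M*K := by
            apply mul_le_mul_of_nonneg_left ?_ (by positivity)
            apply Finset.sum_le_sum_of_subset_of_nonneg
            · intro x hx
              rw [Finset.mem_range]
              exact (Finset.mem_Ico.mp hx).2
            · exact fun _ _ _ => abs_nonneg _
    have hpart2 : ∑ t ∈ Finset.Ico N₁ n, |a n t - a n (t-1)| * |R t|
        ≤ C * (δ * n) := by
      have hstep : ∀ t ∈ Finset.Ico N₁ n, |a n t - a n (t-1)| * |R t|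
          ≤ |a n t - a n (t-1)| * (δ * n) := by
        intro t ht
        rw [Finset.mem_Ico] at ht
        have h1 : |R t| ≤ δ * t := hRsmall t ht.1
        have h2 : (t:ℝ) ≤ n := by exact_mod_cast le_of_lt ht.2
        have h3 : |R t| ≤ δ * n := h1.trans (by
          apply mul_le_mul_of_nonneg_left h2 (le_of_lt hδpos))
        exact mul_le_mul_of_nonneg_left h3 (abs_nonneg _)
      calc ∑ t ∈ Finset.Ico N₁ n, |a n t - a n (t-1)| * |R t|
          ≤ ∑ t ∈ Finset.Ico N₁ n, |a n t - a n (t-1)| * (δ * n) :=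
            Finset.sum_le_sum hstep
        _ = (∑ t ∈ Finset.Ico N₁ n, |a n t - a n (t-1)|) * (δ * n) :=
            (Finset.sum_mul _ _ _).symm
        _ ≤ C * (δ * n) := by
            apply mul_le_mul_of_nonneg_right ?_ (by positivity)
            calc ∑ t ∈ Finset.Ico N₁ n, |a n t - a n (t-1)|
                ≤ ∑ t ∈ Finset.Ico 1 n, |a n t - a n (t-1)| := by
                  apply Finset.sum_le_sum_of_subset_of_nonneg
                  · apply Finset.Ico_subset_Ico h1N₁ (le_refl n)
                  · exact fun _ _ _ => abs_nonneg _
              _ ≤ C := hTV n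
    exact add_le_add hpart1 hpart2
  have habs : |(n:ℝ)⁻¹ * (a n (n-1) * R n
      - ∑ t ∈ Finset.Ico 1 n, (a n t - a n (t-1)) * R t)|
      ≤ (n:ℝ)⁻¹ * (M * (δ * n) + (2*M*K + C * (δ * n))) := by
    rw [abs_mul, abs_of_pos (inv_pos.mpr hnR)]
    apply mul_le_mul_of_nonneg_left ?_ (le_of_lt (inv_pos.mpr hnR))
    calc |a n (n-1) * R n - ∑ t ∈ Finset.Ico 1 n, (a n t - a n (t-1)) * R t|
        ≤ |a n (n-1) * R n| + |∑ t ∈ Finset.Ico 1 n, (a n t - a n (t-1)) * R t| :=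
          abs_sub _ _
      _ ≤ M * (δ * n) + (2*M*K + C * (δ * n)) := by
          apply add_le_add
          · rw [abs_mul]
            apply mul_le_mul (ha n (n-1) (by omega)) hRn (abs_nonneg _) hM
          · refine le_trans (Finset.abs_sum_le_sum_abs _ _) (le_trans ?_ hsum)
            apply le_of_eq
            exact Finset.sum_congr rfl fun t _ => abs_mul _ _
  refine lt_of_le_of_lt habs ?_
  have heq : (n:ℝ)⁻¹ * (M * (δ * n) + (2*M*K + C * (δ * n)))
      = δ * (M + C) + 2*M*K/n := by
    field_simp
    ring
  rw [heq]
  have hb1 : δ * (M + C) < ε/2 := by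
    rw [hδ, div_mul_eq_mul_div, div_lt_iff₀ (by positivity)]
    nlinarith
  have hb2 : 2*M*K/n < ε/2 := by
    have := hN₂ n hnN₂
    rw [Real.dist_eq, sub_zero] at this
    calc 2*M*K/n ≤ |2*M*K/n| := le_abs_self _
    _ < ε/2 := this
  linarith

private lemma weighted_combo (S : ℕ → ℝ) (hS0 : S 0 = 0) (μl : ℝ)
    (hS : Tendsto (fun n : ℕ => S n / n) atTop (𝓝 μl))
    (f : ℝ → ℝ) (M C A : ℝ) (hM : 0 ≤ M) (hC : 0 ≤ C)
    (hb : ∀ n t : ℕ, t < n → |f (((t:ℝ)+1)/n)| ≤ M)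
    (hTV : ∀ n : ℕ, ∑ t ∈ Finset.Ico 1 n, |f (((t:ℝ)+1)/n) - f ((t:ℝ)/n)| ≤ C)
    (hA : Tendsto (fun n : ℕ => (n:ℝ)⁻¹ * ∑ t ∈ Finset.range n, f (((t:ℝ)+1)/n))
      atTop (𝓝 A)) :
    Tendsto (fun n : ℕ => (n:ℝ)⁻¹ * ∑ t ∈ Finset.range n,
      f (((t:ℝ)+1)/n) * (S (t+1) - S t)) atTop (𝓝 (A * μl)) := by
  have hTV' : ∀ n : ℕ, ∑ t ∈ Finset.Ico 1 n,
      |f (((t:ℝ)+1)/n) - f ((((t-1:ℕ):ℝ)+1)/n)| ≤ C := by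
    intro n
    refine le_trans (le_of_eq (Finset.sum_congr rfl fun t ht => ?_)) (hTV n)
    rw [Finset.mem_Ico] at ht
    have hcast : (((t-1:ℕ):ℝ)) + 1 = (t:ℝ) := by
      have h1 : 1 ≤ t := ht.1
      push_cast [h1]
      ring
    rw [hcast]
  have hwd := weighted_det S hS0 μl hS (fun n t => f (((t:ℝ)+1)/n)) M C hM hC
    (fun n t htn => hb n t htn) hTV'
  have hr := hA.mul_const μl
  have hadd := hwd.add hr
  have heq : (fun n : ℕ =>
      ((n:ℝ)⁻¹ * ∑ t ∈ Finset.range n, f (((t:ℝ)+1)/n) * (S (t+1) - S t)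
        - ((n:ℝ)⁻¹ * ∑ t ∈ Finset.range n, f (((t:ℝ)+1)/n)) * μl)
      + ((n:ℝ)⁻¹ * ∑ t ∈ Finset.range n, f (((t:ℝ)+1)/n)) * μl)
      = fun n : ℕ => (n:ℝ)⁻¹ * ∑ t ∈ Finset.range n,
          f (((t:ℝ)+1)/n) * (S (t+1) - S t) := by
    funext n; ring
  rw [heq] at hadd
  simpa using hadd

/-- `g` is Lipschitz continuous piecewise on a finite partition of `(0,1]`
into subintervals. -/
def PiecewiseLipschitzOnIoc01 (g : ℝ → ℝ) : Prop :=
  ∃ (m : ℕ) (t : ℕ → ℝ), 0 < m ∧ t 0 = 0 ∧ t m = 1 ∧ (∀ i < m, t i < t (i + 1)) ∧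
    ∀ i < m, ∃ L : NNReal, LipschitzOnWith L g (Ioc (t i) (t (i + 1)))

theorem sample_kurtosis_limit {Ω : Type*} [MeasureSpace Ω]
    [IsProbabilityMeasure (volume : Measure Ω)]
    (ε : ℕ → Ω → ℝ) (hmeas : ∀ t, Measurable (ε t))
    (hindep : iIndepFun ε volume)
    (hident : ∀ t, Measure.map (ε t) volume = Measure.map (ε 0) volume)
    (hm1 : ∫ ω, ε 0 ω = 0) (hm2 : ∫ ω, (ε 0 ω) ^ 2 = 1)
    (hm4 : Integrable (fun ω => (ε 0 ω) ^ 4))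
    (g : ℝ → ℝ) (c : ℝ) (hc : 0 < c) (hgmeas : Measurable g)
    (hbdd : ∃ M : ℝ, ∀ r ∈ Ioc (0:ℝ) 1, |g r| ≤ M)
    (hlip : PiecewiseLipschitzOnIoc01 g)
    (hlb : ∀ r ∈ Ioc (0:ℝ) 1, c ≤ g r) :
    TendstoInMeasure volume
      (fun (n : ℕ) ω =>
        ((n : ℝ)⁻¹ * ∑ t ∈ Finset.range n, (g (((t : ℝ) + 1) / n) * ε t ω) ^ 4) /
          ((n : ℝ)⁻¹ * ∑ t ∈ Finset.range n, (g (((t : ℝ) + 1) / n) * ε t ω) ^ 2) ^ 2)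
      atTop
      (fun _ => (∫ r in Ioc (0:ℝ) 1, g r ^ 4) / (∫ r in Ioc (0:ℝ) 1, g r ^ 2) ^ 2 *
        ∫ ω, (ε 0 ω) ^ 4) ∧
    TendstoInMeasure volume
      (fun (n : ℕ) ω => (1 / 24) *
        (((n : ℝ)⁻¹ * ∑ t ∈ Finset.range n, (g (((t : ℝ) + 1) / n) * ε t ω) ^ 4) /
          ((n : ℝ)⁻¹ * ∑ t ∈ Finset.range n, (g (((t : ℝ) + 1) / n) * ε t ω) ^ 2) ^ 2 - 3) ^ 2)
      atTop
      (fun _ => (1 / 24) *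
        ((∫ r in Ioc (0:ℝ) 1, g r ^ 4) / (∫ r in Ioc (0:ℝ) 1, g r ^ 2) ^ 2 *
          (∫ ω, (ε 0 ω) ^ 4) - 3) ^ 2) := by
  classical
  obtain ⟨M₀, hM₀⟩ := hbdd
  have hM₀pos : 0 < M₀ :=
    lt_of_lt_of_le hc ((hlb 1 ⟨one_pos, le_refl 1⟩).trans
      ((le_abs_self _).trans (hM₀ 1 ⟨one_pos, le_refl 1⟩)))
  obtain ⟨m, tp, hm, h0, h1, hlt, hLip⟩ := hlip
  -- a uniform real Lipschitz constant
  set Lc : ℕ → ℝ := fun i => if h : i < m then ((hLip i h).choose : ℝ) else 0 with hLc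
  have hLc0 : ∀ i, 0 ≤ Lc i := by
    intro i
    simp only [hLc]
    split
    · exact NNReal.coe_nonneg _
    · exact le_refl 0
  set L : ℝ := ∑ i ∈ Finset.range m, Lc i with hLdef
  have hL0 : 0 ≤ L := Finset.sum_nonneg fun i _ => hLc0 i
  have hLi : ∀ i < m, ∀ x ∈ Ioc (tp i) (tp (i+1)), ∀ y ∈ Ioc (tp i) (tp (i+1)),
      |g y - g x| ≤ L * |y - x| := by
    intro i him x hx y hy
    have hlip' : LipschitzOnWith (hLip i him).choose g (Ioc (tp i) (tp (i+1))) :=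
      (hLip i him).choose_spec
    have hd := (lipschitzOnWith_iff_dist_le_mul.mp hlip') y hy x hx
    rw [Real.dist_eq, Real.dist_eq] at hd
    have hle : ((hLip i him).choose : ℝ) ≤ L := by
      have heq : Lc i = ((hLip i him).choose : ℝ) := by
        simp only [hLc]; rw [dif_pos him]
      rw [hLdef, ← heq]
      exact Finset.single_le_sum (fun j _ => hLc0 j) (Finset.mem_range.mpr him)
    exact hd.trans (mul_le_mul_of_nonneg_right hle (abs_nonneg _))
  have hpieces : ∀ i < m, Ioc (tp i) (tp (i+1)) ⊆ Ioc (0:ℝ) 1 := by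
    intro i him x hx
    constructor
    · have h0i : 0 ≤ tp i := by
        rcases Nat.eq_zero_or_pos i with h | h
        · rw [h, h0]
        · rw [← h0]; exact le_of_lt (tp_mono m tp hlt i (le_of_lt him) 0 h)
      exact lt_of_le_of_lt h0i hx.1
    · have hup : tp (i+1) ≤ 1 := by
        rw [← h1]
        rcases eq_or_lt_of_le (Nat.succ_le_of_lt him) with he | hlm
        · exact le_of_eq (congrArg tp he)
        · exact le_of_lt (tp_mono m tp hlt m (le_refl m) (i+1) hlm)
      exact hx.2.trans hup
  -- oscillation data for g^2 and g^4
  have hflip2 : ∀ i < m, ∀ x ∈ Ioc (tp i) (tp (i+1)), ∀ y ∈ Ioc (tp i) (tp (i+1)),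
      |g y ^ 2 - g x ^ 2| ≤ (2*M₀*L) * |y - x| := by
    intro i him x hx y hy
    have hgx := hM₀ x (hpieces i him hx)
    have hgy := hM₀ y (hpieces i him hy)
    have hgl := hLi i him x hx y hy
    have he : g y^2 - g x^2 = (g y + g x) * (g y - g x) := by ring
    rw [he, abs_mul]
    calc |g y + g x| * |g y - g x| ≤ (2*M₀) * (L * |y-x|) := by
          apply mul_le_mul ?_ hgl (abs_nonneg _) (by positivity)
          calc |g y + g x| ≤ |g y| + |g x| := abs_add_le _ _
          _ ≤ 2*M₀ := by linarith
      _ = (2*M₀*L)*|y-x| := by ring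
  have hflip4 : ∀ i < m, ∀ x ∈ Ioc (tp i) (tp (i+1)), ∀ y ∈ Ioc (tp i) (tp (i+1)),
      |g y ^ 4 - g x ^ 4| ≤ (4*M₀^3*L) * |y - x| := by
    intro i him x hx y hy
    have hgx := hM₀ x (hpieces i him hx)
    have hgy := hM₀ y (hpieces i him hy)
    have hgl := hLi i him x hx y hy
    have hsqx : g x^2 ≤ M₀^2 := by nlinarith [le_abs_self (g x), neg_abs_le (g x)]
    have hsqy : g y^2 ≤ M₀^2 := by nlinarith [le_abs_self (g y), neg_abs_le (g y)]
    have he : g y^4 - g x^4 = (g y^2 + g x^2) * ((g y + g x) * (g y - g x)) := by ring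
    rw [he, abs_mul, abs_mul]
    have hb1 : |g y^2 + g x^2| ≤ 2*M₀^2 := by
      rw [abs_of_nonneg (by positivity)]
      linarith
    have hb2 : |g y + g x| ≤ 2*M₀ := by
      calc |g y + g x| ≤ |g y| + |g x| := abs_add_le _ _
      _ ≤ 2*M₀ := by linarith
    calc |g y^2 + g x^2| * (|g y + g x| * |g y - g x|)
        ≤ (2*M₀^2) * ((2*M₀) * (L * |y-x|)) := by
          apply mul_le_mul hb1 ?_ (by positivity) (by positivity)
          exact mul_le_mul hb2 hgl (abs_nonneg _) (by positivity)
      _ = (4*M₀^3*L)*|y-x| := by ring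
  have hMf2 : ∀ r ∈ Ioc (0:ℝ) 1, |g r ^ 2| ≤ M₀^2 := by
    intro r hr
    have := hM₀ r hr
    rw [abs_of_nonneg (by positivity)]
    nlinarith [le_abs_self (g r), neg_abs_le (g r)]
  have hMf4 : ∀ r ∈ Ioc (0:ℝ) 1, |g r ^ 4| ≤ M₀^4 := by
    intro r hr
    have := hM₀ r hr
    rw [abs_of_nonneg (by positivity)]
    have h2 : g r^2 ≤ M₀^2 := by nlinarith [le_abs_self (g r), neg_abs_le (g r)]
    nlinarith [h2, sq_nonneg (g r),
      mul_le_mul h2 h2 (sq_nonneg (g r)) (by positivity : (0:ℝ) ≤ M₀^2)]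
  -- Riemann sums
  have hRie2 := riemann m tp hm h0 h1 hlt (fun r => g r ^ 2) (2*M₀*L) (M₀^2)
    (by positivity) (by positivity) hflip2 hMf2 (hgmeas.pow_const 2)
  have hRie4 := riemann m tp hm h0 h1 hlt (fun r => g r ^ 4) (4*M₀^3*L) (M₀^4)
    (by positivity) (by positivity) hflip4 hMf4 (hgmeas.pow_const 4)
  have hTV2 := tv_bound m tp hm h0 h1 hlt (fun r => g r ^ 2) (2*M₀*L) (M₀^2)
    (by positivity) (by positivity) hflip2 hMf2
  have hTV4 := tv_bound m tp hm h0 h1 hlt (fun r => g r ^ 4) (4*M₀^3*L) (M₀^4)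
    (by positivity) (by positivity) hflip4 hMf4
  -- grid point bounds
  have hb2 : ∀ n t : ℕ, t < n → |g (((t:ℝ)+1)/n) ^ 2| ≤ M₀^2 := by
    intro n t htn
    apply hMf2
    have hcast : ((t:ℝ)+1) = ((t+1:ℕ):ℝ) := by push_cast; ring
    rw [hcast]
    exact grid_mem n (t+1) (by omega) (by omega) htn
  have hb4 : ∀ n t : ℕ, t < n → |g (((t:ℝ)+1)/n) ^ 4| ≤ M₀^4 := by
    intro n t htn
    apply hMf4
    have hcast : ((t:ℝ)+1) = ((t+1:ℕ):ℝ) := by push_cast; ring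
    rw [hcast]
    exact grid_mem n (t+1) (by omega) (by omega) htn
  -- Strong laws of large numbers for ε^2 and ε^4
  have hm2int : Integrable (fun ω => ε 0 ω ^ 2) := by
    apply Integrable.mono' ((integrable_const (1:ℝ)).add hm4)
      ((hmeas 0).pow_const 2).aestronglyMeasurable
    filter_upwards with ω
    show ‖ε 0 ω ^ 2‖ ≤ 1 + ε 0 ω ^ 4
    rw [Real.norm_eq_abs, abs_of_nonneg (by positivity : (0:ℝ) ≤ ε 0 ω ^ 2)]
    nlinarith [sq_nonneg (ε 0 ω ^ 2 - 1)]
  have hsl2 : ∀ᵐ ω, Tendsto (fun n : ℕ => (∑ i ∈ Finset.range n, ε i ω ^ 2) / n)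
      atTop (𝓝 1) := by
    have h := strong_law_ae_real (fun i ω => ε i ω ^ 2) hm2int
      (fun i j hij => (hindep.indepFun hij).comp
        (measurable_id.pow_const 2) (measurable_id.pow_const 2))
      (fun i => IdentDistrib.comp
        ⟨(hmeas i).aemeasurable, (hmeas 0).aemeasurable, hident i⟩
        (measurable_id.pow_const 2))
    rw [hm2] at h
    exact h
  have hsl4 : ∀ᵐ ω, Tendsto (fun n : ℕ => (∑ i ∈ Finset.range n, ε i ω ^ 4) / n)
      atTop (𝓝 (∫ ω, ε 0 ω ^ 4)) := by
    have h := strong_law_ae_real (fun i ω => ε i ω ^ 4) hm4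
      (fun i j hij => (hindep.indepFun hij).comp
        (measurable_id.pow_const 4) (measurable_id.pow_const 4))
      (fun i => IdentDistrib.comp
        ⟨(hmeas i).aemeasurable, (hmeas 0).aemeasurable, hident i⟩
        (measurable_id.pow_const 4))
    simpa using h
  -- combined a.e. limits for the weighted sums
  have hA2 : ∀ᵐ ω : Ω, Tendsto (fun n : ℕ => (n:ℝ)⁻¹ * ∑ t ∈ Finset.range n,
      (g (((t:ℝ)+1)/n) * ε t ω)^2) atTop
      (𝓝 ((∫ r in Ioc (0:ℝ) 1, g r ^ 2) * 1)) := by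
    filter_upwards [hsl2] with ω hω
    have h := weighted_combo (fun j => ∑ i ∈ Finset.range j, ε i ω ^ 2) (by simp) 1 hω
      (fun r => g r ^ 2) (M₀^2) ((2*M₀*L) + 2*(M₀^2)*m) (∫ r in Ioc (0:ℝ) 1, g r ^ 2)
      (by positivity) (by positivity) hb2 hTV2 hRie2
    have heq : (fun n : ℕ => (n:ℝ)⁻¹ * ∑ t ∈ Finset.range n,
        (g (((t:ℝ)+1)/n) * ε t ω)^2)
        = fun n : ℕ => (n:ℝ)⁻¹ * ∑ t ∈ Finset.range n,
          g (((t:ℝ)+1)/n)^2 * ((∑ i ∈ Finset.range (t+1), ε i ω ^ 2)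
            - ∑ i ∈ Finset.range t, ε i ω ^ 2) := by
      funext n
      congr 1
      refine Finset.sum_congr rfl fun t _ => ?_
      rw [Finset.sum_range_succ, add_sub_cancel_left, mul_pow]
    rw [heq]
    exact h
  have hA4 : ∀ᵐ ω : Ω, Tendsto (fun n : ℕ => (n:ℝ)⁻¹ * ∑ t ∈ Finset.range n,
      (g (((t:ℝ)+1)/n) * ε t ω)^4) atTop
      (𝓝 ((∫ r in Ioc (0:ℝ) 1, g r ^ 4) * ∫ ω, ε 0 ω ^ 4)) := by
    filter_upwards [hsl4] with ω hω
    have h := weighted_combo (fun j => ∑ i ∈ Finset.range j, ε i ω ^ 4) (by simp)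
      (∫ ω, ε 0 ω ^ 4) hω
      (fun r => g r ^ 4) (M₀^4) ((4*M₀^3*L) + 2*(M₀^4)*m) (∫ r in Ioc (0:ℝ) 1, g r ^ 4)
      (by positivity) (by positivity) hb4 hTV4 hRie4
    have heq : (fun n : ℕ => (n:ℝ)⁻¹ * ∑ t ∈ Finset.range n,
        (g (((t:ℝ)+1)/n) * ε t ω)^4)
        = fun n : ℕ => (n:ℝ)⁻¹ * ∑ t ∈ Finset.range n,
          g (((t:ℝ)+1)/n)^4 * ((∑ i ∈ Finset.range (t+1), ε i ω ^ 4)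
            - ∑ i ∈ Finset.range t, ε i ω ^ 4) := by
      funext n
      congr 1
      refine Finset.sum_congr rfl fun t _ => ?_
      rw [Finset.sum_range_succ, add_sub_cancel_left, mul_pow]
    rw [heq]
    exact h
  -- positivity of the denominator limit
  have hI2pos : 0 < ∫ r in Ioc (0:ℝ) 1, g r ^ 2 := by
    have hvol01 : volume (Ioc (0:ℝ) 1) ≠ ⊤ := by
      rw [Real.volume_Ioc]; exact ENNReal.ofReal_ne_top
    have hint2 : IntegrableOn (fun r => g r ^ 2) (Ioc (0:ℝ) 1) volume := by
      apply Measure.integrableOn_of_bounded hvol01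
        (hgmeas.pow_const 2).aestronglyMeasurable (M := M₀^2)
      rw [ae_restrict_iff' measurableSet_Ioc]
      filter_upwards with x hx
      rw [Real.norm_eq_abs]
      exact hMf2 x hx
    have hmono : ∫ r in Ioc (0:ℝ) 1, (c^2 : ℝ) ≤ ∫ r in Ioc (0:ℝ) 1, g r ^ 2 := by
      apply setIntegral_mono_on ((integrableOn_const_iff).mpr (Or.inr ?_)) hint2
        measurableSet_Ioc ?_
      · rw [Real.volume_Ioc]; exact ENNReal.ofReal_lt_top
      · intro x hx
        have := hlb x hx
        nlinarith
    have hconst : ∫ r in Ioc (0:ℝ) 1, (c^2 : ℝ) = c^2 := by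
      rw [setIntegral_const, measureReal_def, Real.volume_Ioc]
      norm_num
    rw [hconst] at hmono
    exact lt_of_lt_of_le (by positivity) hmono
  -- a.e. convergence of the kurtosis ratio
  have hratio : ∀ᵐ ω : Ω, Tendsto (fun n : ℕ =>
      ((n:ℝ)⁻¹ * ∑ t ∈ Finset.range n, (g (((t:ℝ)+1)/n) * ε t ω)^4) /
        ((n:ℝ)⁻¹ * ∑ t ∈ Finset.range n, (g (((t:ℝ)+1)/n) * ε t ω)^2)^2) atTop
      (𝓝 ((∫ r in Ioc (0:ℝ) 1, g r ^ 4) / (∫ r in Ioc (0:ℝ) 1, g r ^ 2)^2 *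
        ∫ ω, ε 0 ω ^ 4)) := by
    filter_upwards [hA2, hA4] with ω h2 h4
    have hden := h2.pow 2
    have hne : ((∫ r in Ioc (0:ℝ) 1, g r ^ 2) * 1)^2 ≠ 0 := by
      rw [mul_one]; exact pow_ne_zero 2 (ne_of_gt hI2pos)
    have hdiv := h4.div hden hne
    have hlim : (∫ r in Ioc (0:ℝ) 1, g r ^ 4) * (∫ ω, ε 0 ω ^ 4)
        / ((∫ r in Ioc (0:ℝ) 1, g r ^ 2) * 1)^2
        = (∫ r in Ioc (0:ℝ) 1, g r ^ 4) / (∫ r in Ioc (0:ℝ) 1, g r ^ 2)^2 *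
          ∫ ω, ε 0 ω ^ 4 := by
      rw [mul_one]; ring
    rw [hlim] at hdiv
    exact hdiv
  have hmr : ∀ n : ℕ, Measurable (fun ω =>
      ((n:ℝ)⁻¹ * ∑ t ∈ Finset.range n, (g (((t:ℝ)+1)/n) * ε t ω)^4) /
        ((n:ℝ)⁻¹ * ∑ t ∈ Finset.range n, (g (((t:ℝ)+1)/n) * ε t ω)^2)^2) := by
    intro n
    apply Measurable.div
    · exact measurable_const.mul (Finset.measurable_sum _ fun t _ =>
        ((measurable_const.mul (hmeas t)).pow_const 4))
    · exact (measurable_const.mul (Finset.measurable_sum _ fun t _ =>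
        ((measurable_const.mul (hmeas t)).pow_const 2))).pow_const 2
  constructor
  · exact tendstoInMeasure_of_tendsto_ae (fun n => (hmr n).aestronglyMeasurable) hratio
  · apply tendstoInMeasure_of_tendsto_ae
    · intro n
      exact (measurable_const.mul
        (((hmr n).sub measurable_const).pow_const 2)).aestronglyMeasurable
    · filter_upwards [hratio] with ω h
      exact ((h.sub_const 3).pow 2).const_mul (1/24)
end
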